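/- Let n ≥ 3 and let A_i, B_i be the n×n bonded Burau matrices (A_i has the block [[1-t,t],[1,0]] at rows/columns i,i+1 and identity elsewhere; B_i has the block [[1-tz,tz],[z,1-z]] at rows/columns i,i+1 and identity elsewhere). Then for 1 ≤ i ≤ n-2, A_{i+1} A_i B_{i+1} = B_i A_{i+1} A_i. -/

import Mathlib

/-- The ground ring `ℤ[t,t⁻¹,z]`: polynomials in `z` over Laurent polynomials in `t`. -/
noncomputable abbrev R : Type := Polynomial (LaurentPolynomial ℤ)

/-- The Laurent variable `t`. -/
noncomputable def t : R := Polynomial.C (LaurentPolynomial.T 1)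

/-- The polynomial variable `z`. -/
noncomputable def z : R := Polynomial.X

/-- The `n × n` unreduced Burau matrix of the braid generator `σ_i` (1-based index `i`):
identity except for the block `[[1-t, t],[1, 0]]` at rows/columns `i, i+1`. -/
noncomputable def burauA (n i : ℕ) : Matrix (Fin n) (Fin n) R :=
  Matrix.of fun p q =>
    if (p : ℕ) + 1 = i ∧ (q : ℕ) + 1 = i then 1 - t
    else if (p : ℕ) + 1 = i ∧ (q : ℕ) = i then t
    else if (p : ℕ) = i ∧ (q : ℕ) + 1 = i then 1
    else if (p : ℕ) = i ∧ (q : ℕ) = i then 0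
    else if p = q then 1 else 0

/-- The `n × n` bonded Burau matrix of the bond generator `b_i` (1-based index `i`):
identity except for the block `[[1-tz, tz],[z, 1-z]]` at rows/columns `i, i+1`. -/
noncomputable def burauB (n i : ℕ) : Matrix (Fin n) (Fin n) R :=
  Matrix.of fun p q =>
    if (p : ℕ) + 1 = i ∧ (q : ℕ) + 1 = i then 1 - t * z
    else if (p : ℕ) + 1 = i ∧ (q : ℕ) = i then t * z
    else if (p : ℕ) = i ∧ (q : ℕ) + 1 = i then z
    else if (p : ℕ) = i ∧ (q : ℕ) = i then 1 - z
    else if p = q then 1 else 0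

/-- Identity matrix modified by a `3 × 3` block at rows/columns `j, j+1, j+2` (0-based). -/
noncomputable def loc3 (n j : ℕ) (M : Matrix (Fin 3) (Fin 3) R) : Matrix (Fin n) (Fin n) R :=
  Matrix.of fun p q =>
    if h : j ≤ (p : ℕ) ∧ (p : ℕ) < j + 3 ∧ j ≤ (q : ℕ) ∧ (q : ℕ) < j + 3 then
      M ⟨(p : ℕ) - j, by omega⟩ ⟨(q : ℕ) - j, by omega⟩
    else if (p : ℕ) = (q : ℕ) then 1 else 0

lemma sum_three {n j : ℕ} (h : j + 3 ≤ n) (f : Fin n → R)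
    (hf : ∀ k : Fin n, ¬ (j ≤ (k : ℕ) ∧ (k : ℕ) < j + 3) → f k = 0) :
    ∑ k, f k = f ⟨j, by omega⟩ + f ⟨j+1, by omega⟩ + f ⟨j+2, by omega⟩ := by
  rw [← Finset.sum_subset (Finset.subset_univ
      ({⟨j, by omega⟩, ⟨j+1, by omega⟩, ⟨j+2, by omega⟩} : Finset (Fin n)))]
  · rw [Finset.sum_insert (by simp [Fin.ext_iff]), Finset.sum_insert (by simp [Fin.ext_iff]),
      Finset.sum_singleton]
    ring
  · intro x _ hx
    apply hf
    simp [Fin.ext_iff] at hx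
    omega

lemma loc3_mul {n j : ℕ} (h : j + 3 ≤ n) (M N : Matrix (Fin 3) (Fin 3) R) :
    loc3 n j M * loc3 n j N = loc3 n j (M * N) := by
  apply Matrix.ext
  intro p q
  rw [Matrix.mul_apply]
  by_cases hp : j ≤ (p : ℕ) ∧ (p : ℕ) < j + 3
  · rw [sum_three h]
    · by_cases hq : j ≤ (q : ℕ) ∧ (q : ℕ) < j + 3
      · simp only [loc3, Matrix.of_apply]
        rw [dif_pos, dif_pos, dif_pos, dif_pos, dif_pos, dif_pos, dif_pos] <;>
          try (apply And.intro <;> omega)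
        simp only [Matrix.mul_apply, Fin.sum_univ_three,
          show j - j = 0 from by omega, show j + 1 - j = 1 from by omega,
          show j + 2 - j = 2 from by omega]
        rfl
      · have h0 : loc3 n j (M * N) p q = 0 := by
          simp only [loc3, Matrix.of_apply]
          rw [dif_neg (by omega), if_neg (by omega)]
        rw [h0]
        have hz : ∀ k : Fin n, j ≤ (k : ℕ) → (k : ℕ) < j + 3 → loc3 n j N k q = 0 := by
          intro k h1 h2
          simp only [loc3, Matrix.of_apply]
          rw [dif_neg (by omega), if_neg (by omega)]
        rw [hz ⟨j, by omega⟩ (by simp) (by simp), hz ⟨j+1, by omega⟩ (by simp) (by simp),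
          hz ⟨j+2, by omega⟩ (by simp) (by simp)]
        ring
    · intro k hk
      have : loc3 n j M p k = 0 := by
        simp only [loc3, Matrix.of_apply]
        rw [dif_neg (by omega), if_neg (by omega)]
      rw [this, zero_mul]
  · have hrow : ∀ k : Fin n, loc3 n j M p k = if (p : ℕ) = (k : ℕ) then 1 else 0 := by
      intro k
      simp only [loc3, Matrix.of_apply]
      rw [dif_neg (by omega)]
    have : ∑ k, loc3 n j M p k * loc3 n j N k q = loc3 n j N p q := by
      rw [Finset.sum_eq_single p]
      · rw [hrow, if_pos rfl, one_mul]
      · intro k _ hk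
        rw [hrow, if_neg (by simpa [Fin.ext_iff, eq_comm] using hk), zero_mul]
      · simp
    rw [this]
    simp only [loc3, Matrix.of_apply]
    rw [dif_neg (by omega), dif_neg (by omega)]

lemma burauA_eq₁ {n j : ℕ} (h : j + 3 ≤ n) :
    burauA n (j + 1) = loc3 n j !![1 - t, t, 0; 1, 0, 0; 0, 0, 1] := by
  apply Matrix.ext
  intro p q
  simp only [burauA, loc3, Matrix.of_apply]
  by_cases hb : j ≤ (p : ℕ) ∧ (p : ℕ) < j + 3 ∧ j ≤ (q : ℕ) ∧ (q : ℕ) < j + 3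
  · rw [dif_pos hb]
    obtain ⟨h1, h2, h3, h4⟩ := hb
    have hp : (p : ℕ) = j ∨ (p : ℕ) = j + 1 ∨ (p : ℕ) = j + 2 := by omega
    have hq : (q : ℕ) = j ∨ (q : ℕ) = j + 1 ∨ (q : ℕ) = j + 2 := by omega
    rcases hp with hp | hp | hp <;> rcases hq with hq | hq | hq <;>
      simp only [Fin.ext_iff, hp, hq, show j - j = 0 from by omega,
        show j + 1 - j = 1 from by omega, show j + 2 - j = 2 from by omega] <;>
      · split_ifs <;> first | rfl | omega | simp_all
  · rw [dif_neg hb]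
    simp only [Fin.ext_iff]
    split_ifs <;> first | rfl | omega

lemma burauA_eq₂ {n j : ℕ} (h : j + 3 ≤ n) :
    burauA n (j + 2) = loc3 n j !![1, 0, 0; 0, 1 - t, t; 0, 1, 0] := by
  apply Matrix.ext
  intro p q
  simp only [burauA, loc3, Matrix.of_apply]
  by_cases hb : j ≤ (p : ℕ) ∧ (p : ℕ) < j + 3 ∧ j ≤ (q : ℕ) ∧ (q : ℕ) < j + 3
  · rw [dif_pos hb]
    obtain ⟨h1, h2, h3, h4⟩ := hb
    have hp : (p : ℕ) = j ∨ (p : ℕ) = j + 1 ∨ (p : ℕ) = j + 2 := by omega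
    have hq : (q : ℕ) = j ∨ (q : ℕ) = j + 1 ∨ (q : ℕ) = j + 2 := by omega
    rcases hp with hp | hp | hp <;> rcases hq with hq | hq | hq <;>
      simp only [Fin.ext_iff, hp, hq, show j - j = 0 from by omega,
        show j + 1 - j = 1 from by omega, show j + 2 - j = 2 from by omega] <;>
      · split_ifs <;> first | rfl | omega | simp_all
  · rw [dif_neg hb]
    simp only [Fin.ext_iff]
    split_ifs <;> first | rfl | omega

lemma burauB_eq₁ {n j : ℕ} (h : j + 3 ≤ n) :
    burauB n (j + 1) = loc3 n j !![1 - t * z, t * z, 0; z, 1 - z, 0; 0, 0, 1] := by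
  apply Matrix.ext
  intro p q
  simp only [burauB, loc3, Matrix.of_apply]
  by_cases hb : j ≤ (p : ℕ) ∧ (p : ℕ) < j + 3 ∧ j ≤ (q : ℕ) ∧ (q : ℕ) < j + 3
  · rw [dif_pos hb]
    obtain ⟨h1, h2, h3, h4⟩ := hb
    have hp : (p : ℕ) = j ∨ (p : ℕ) = j + 1 ∨ (p : ℕ) = j + 2 := by omega
    have hq : (q : ℕ) = j ∨ (q : ℕ) = j + 1 ∨ (q : ℕ) = j + 2 := by omega
    rcases hp with hp | hp | hp <;> rcases hq with hq | hq | hq <;>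
      simp only [Fin.ext_iff, hp, hq, show j - j = 0 from by omega,
        show j + 1 - j = 1 from by omega, show j + 2 - j = 2 from by omega] <;>
      · split_ifs <;> first | rfl | omega | simp_all
  · rw [dif_neg hb]
    simp only [Fin.ext_iff]
    split_ifs <;> first | rfl | omega

lemma burauB_eq₂ {n j : ℕ} (h : j + 3 ≤ n) :
    burauB n (j + 2) = loc3 n j !![1, 0, 0; 0, 1 - t * z, t * z; 0, z, 1 - z] := by
  apply Matrix.ext
  intro p q
  simp only [burauB, loc3, Matrix.of_apply]
  by_cases hb : j ≤ (p : ℕ) ∧ (p : ℕ) < j + 3 ∧ j ≤ (q : ℕ) ∧ (q : ℕ) < j + 3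
  · rw [dif_pos hb]
    obtain ⟨h1, h2, h3, h4⟩ := hb
    have hp : (p : ℕ) = j ∨ (p : ℕ) = j + 1 ∨ (p : ℕ) = j + 2 := by omega
    have hq : (q : ℕ) = j ∨ (q : ℕ) = j + 1 ∨ (q : ℕ) = j + 2 := by omega
    rcases hp with hp | hp | hp <;> rcases hq with hq | hq | hq <;>
      simp only [Fin.ext_iff, hp, hq, show j - j = 0 from by omega,
        show j + 1 - j = 1 from by omega, show j + 2 - j = 2 from by omega] <;>
      · split_ifs <;> first | rfl | omega | simp_all
  · rw [dif_neg hb]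
    simp only [Fin.ext_iff]
    split_ifs <;> first | rfl | omega

lemma key3 :
    !![1, 0, 0; 0, 1 - t, t; 0, 1, 0] * !![1 - t, t, 0; 1, 0, 0; 0, 0, 1] *
        !![1, 0, 0; 0, 1 - t * z, t * z; 0, z, 1 - z] =
      !![1 - t * z, t * z, 0; z, 1 - z, 0; 0, 0, 1] *
        (!![1, 0, 0; 0, 1 - t, t; 0, 1, 0] * !![1 - t, t, 0; 1, 0, 0; 0, 0, 1]) := by
  apply Matrix.ext
  intro a b
  fin_cases a <;> fin_cases b <;>
    simp [Matrix.mul_apply, Fin.sum_univ_three, Matrix.vecHead, Matrix.vecTail] <;> ring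

/-- mixed relation (M3): `A_{i+1} A_i B_{i+1} = B_i A_{i+1} A_i`
for the `n × n` bonded Burau matrices, `n ≥ 3`, `1 ≤ i ≤ n-2`. -/
theorem burau_mixed_M3 (n i : ℕ) (hn : 3 ≤ n) (hi1 : 1 ≤ i) (hi2 : i ≤ n - 2) :
    burauA n (i + 1) * burauA n i * burauB n (i + 1) =
      burauB n i * (burauA n (i + 1) * burauA n i) := by
  obtain ⟨j, rfl⟩ : ∃ j, i = j + 1 := ⟨i - 1, by omega⟩
  have h : j + 3 ≤ n := by omega
  rw [show j + 1 + 1 = j + 2 from rfl, burauA_eq₁ h, burauA_eq₂ h, burauB_eq₁ h, burauB_eq₂ h,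
    loc3_mul h, loc3_mul h, loc3_mul h]
  rw [key3]
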